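/- For every integer p ≥ 1, the growth constants of partially directed paths in the symmetric wedge V_p and the asymmetric wedge W_p both equal 1+√2: lim_{n→∞} v_{n,p}^{1/n} = lim_{n→∞} w_{n,p}^{1/n} = 1+√2. -/

import Mathlib

/-- Allowed steps: north, south, east. -/
def AllowedStep (s : ℤ × ℤ) : Prop := s = (0, 1) ∨ s = (0, -1) ∨ s = (1, 0)

/-- No north step immediately follows a south step or vice versa. -/
def NoReversal (l : List (ℤ × ℤ)) : Prop :=
  l.Chain' (fun s t => ¬(s = (0, 1) ∧ t = (0, -1)) ∧ ¬(s = (0, -1) ∧ t = (0, 1)))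

/-- A partially directed self-avoiding path of length `n`, encoded by its list of steps. -/
def IsPDPath (n : ℕ) (l : List (ℤ × ℤ)) : Prop :=
  l.length = n ∧ (∀ s ∈ l, AllowedStep s) ∧ NoReversal l

/-- The vertices visited by a path starting at the origin. -/
def pathVertices (l : List (ℤ × ℤ)) : List (ℤ × ℤ) := l.scanl (· + ·) (0, 0)

/-- Number of unrestricted partially directed paths of length `n`. -/
noncomputable def numPD (n : ℕ) : ℕ := Nat.card {l : List (ℤ × ℤ) // IsPDPath n l}

/-- Membership in the symmetric wedge `V_p`. -/
def InSymWedge (p : ℕ) (q : ℤ × ℤ) : Prop :=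
  0 ≤ q.1 ∧ -(p : ℤ) * q.1 ≤ q.2 ∧ q.2 ≤ (p : ℤ) * q.1

/-- Membership in the asymmetric wedge `W_p`. -/
def InAsymWedge (p : ℕ) (q : ℤ × ℤ) : Prop :=
  0 ≤ q.1 ∧ 0 ≤ q.2 ∧ q.2 ≤ (p : ℤ) * q.1

/-- Number of partially directed paths of length `n` confined to the symmetric wedge `V_p`. -/
noncomputable def numPDsym (p n : ℕ) : ℕ :=
  Nat.card {l : List (ℤ × ℤ) // IsPDPath n l ∧ ∀ q ∈ pathVertices l, InSymWedge p q}

/-- Number of partially directed paths of length `n` confined to the asymmetric wedge `W_p`. -/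
noncomputable def numPDasym (p n : ℕ) : ℕ :=
  Nat.card {l : List (ℤ × ℤ) // IsPDPath n l ∧ ∀ q ∈ pathVertices l, InAsymWedge p q}

/-- Number of partially directed paths of length `n` in the quadrant (x ≥ 0 and y ≥ 0)
whose last vertex lies on the line `Y = 0`. -/
noncomputable def numPDquadEnd0 (n : ℕ) : ℕ :=
  Nat.card {l : List (ℤ × ℤ) //
    IsPDPath n l ∧ (∀ q ∈ pathVertices l, 0 ≤ q.1 ∧ 0 ≤ q.2) ∧ l.sum.2 = 0}

/-- Number of partially directed paths of length `n` lying on or above the line `Y = 0`. -/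
noncomputable def numPDhalf (n : ℕ) : ℕ :=
  Nat.card {l : List (ℤ × ℤ) // IsPDPath n l ∧ ∀ q ∈ pathVertices l, 0 ≤ q.2}

/-- Number of partially directed paths of length `n` lying on or above the line `Y = 0`
whose last vertex lies on the line `Y = 0`. -/
noncomputable def numPDhalfEnd0 (n : ℕ) : ℕ :=
  Nat.card {l : List (ℤ × ℤ) //
    IsPDPath n l ∧ (∀ q ∈ pathVertices l, 0 ≤ q.2) ∧ l.sum.2 = 0}

namespace PDW

abbrev SRel : ℤ × ℤ → ℤ × ℤ → Prop :=
  fun s t => ¬(s = (0, 1) ∧ t = (0, -1)) ∧ ¬(s = (0, -1) ∧ t = (0, 1))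

lemma noReversal_iff (l : List (ℤ × ℤ)) : NoReversal l ↔ l.Chain' SRel := Iff.rfl

lemma srel_left_east (t : ℤ × ℤ) : SRel (1, 0) t := by
  constructor <;> rintro ⟨h, -⟩ <;> simp at h

lemma srel_right_east (t : ℤ × ℤ) : SRel t (1, 0) := by
  constructor <;> rintro ⟨-, h⟩ <;> simp at h

lemma stepFinset_mem {s : ℤ × ℤ} (h : AllowedStep s) :
    s ∈ ({(0, 1), (0, -1), (1, 0)} : Finset (ℤ × ℤ)) := by
  rcases h with h | h | h <;> simp [h]

lemma finite_paths {n : ℕ} {P : List (ℤ × ℤ) → Prop}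
    (hP : ∀ l, P l → l.length = n ∧ ∀ s ∈ l, AllowedStep s) : Finite {l // P l} := by
  classical
  have h : Function.Injective
      (fun x : {l // P l} => (fun i : Fin n =>
        (⟨x.1.get ⟨i, by rw [(hP x.1 x.2).1]; exact i.2⟩,
          stepFinset_mem ((hP x.1 x.2).2 _ (x.1.get_mem _))⟩ :
          ({(0, 1), (0, -1), (1, 0)} : Finset (ℤ × ℤ))))) := by
    rintro ⟨l₁, h₁⟩ ⟨l₂, h₂⟩ h
    ext1
    apply List.ext_get (by rw [(hP l₁ h₁).1, (hP l₂ h₂).1])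
    intro i hi₁ hi₂
    have := congrFun h ⟨i, by rw [← (hP l₁ h₁).1]; exact hi₁⟩
    simpa using congrArg Subtype.val this
  exact Finite.of_injective _ h

/-- prefix sums description of pathVertices -/
lemma mem_scanl {l : List (ℤ × ℤ)} {a q : ℤ × ℤ} :
    q ∈ l.scanl (· + ·) a ↔ ∃ j ≤ l.length, q = a + (l.take j).sum := by
  induction l generalizing a with
  | nil => simp
  | cons x xs ih =>
    simp only [List.scanl_cons, List.singleton_append, List.mem_cons, ih]
    constructor
    · rintro (rfl | ⟨j, hj, rfl⟩)
      · exact ⟨0, by simp⟩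
      · exact ⟨j + 1, by simpa using hj, by simp [add_assoc]⟩
    · rintro ⟨j, hj, rfl⟩
      cases j with
      | zero => left; simp
      | succ j => right; exact ⟨j, by simpa using hj, by simp [add_assoc]⟩

lemma mem_pathVertices {l : List (ℤ × ℤ)} {q : ℤ × ℤ} :
    q ∈ pathVertices l ↔ ∃ j ≤ l.length, q = (l.take j).sum := by
  simp [pathVertices, mem_scanl, show ((0:ℤ), (0:ℤ)) = 0 from rfl]

lemma vertices_prop_iff {l : List (ℤ × ℤ)} {P : ℤ × ℤ → Prop} :
    (∀ q ∈ pathVertices l, P q) ↔ ∀ j ≤ l.length, P ((l.take j).sum) := by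
  constructor
  · intro h j hj; exact h _ (mem_pathVertices.2 ⟨j, hj, rfl⟩)
  · intro h q hq; obtain ⟨j, hj, rfl⟩ := mem_pathVertices.1 hq; exact h j hj

/-- bounds on prefix sums -/
lemma psum_bounds {l : List (ℤ × ℤ)} (hl : ∀ s ∈ l, AllowedStep s) :
    0 ≤ l.sum.1 ∧ l.sum.1 ≤ l.length ∧ -(l.length : ℤ) ≤ l.sum.2 ∧ l.sum.2 ≤ l.length := by
  induction l with
  | nil => simp
  | cons x xs ih =>
    obtain ⟨h1, h2, h3, h4⟩ := ih (fun s hs => hl s (List.mem_cons_of_mem _ hs))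
    have hx := hl x List.mem_cons_self
    rcases hx with rfl | rfl | rfl <;>
      simp [Prod.fst_add, Prod.snd_add] <;> omega

end PDW

namespace PDW

instance instFinitePD (n : ℕ) : Finite {l // IsPDPath n l} :=
  finite_paths (fun _ h => ⟨h.1, h.2.1⟩)

lemma path_tail {n : ℕ} {s : ℤ × ℤ} {l : List (ℤ × ℤ)} (h : IsPDPath (n + 1) (s :: l)) :
    IsPDPath n l :=
  ⟨by simpa using h.1, fun t ht => h.2.1 t (List.mem_cons_of_mem _ ht), h.2.2.tail⟩

lemma path_cons {n : ℕ} {s : ℤ × ℤ} {l : List (ℤ × ℤ)} (h : IsPDPath n l)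
    (hs : AllowedStep s) (hhd : ∀ t ∈ l.head?, SRel s t) : IsPDPath (n + 1) (s :: l) := by
  refine ⟨by simpa using h.1, ?_, List.isChain_cons.2 ⟨hhd, h.2.2⟩⟩
  intro t ht
  rcases List.mem_cons.1 ht with rfl | ht
  · exact hs
  · exact h.2.1 t ht

lemma allowedN : AllowedStep (0, 1) := Or.inl rfl
lemma allowedS : AllowedStep (0, -1) := Or.inr (Or.inl rfl)
lemma allowedE : AllowedStep (1, 0) := Or.inr (Or.inr rfl)

lemma eastPath_is {n : ℕ} : IsPDPath n (List.replicate n ((1 : ℤ), (0 : ℤ))) :=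
  ⟨by simp, fun s hs => by rw [List.eq_of_mem_replicate hs]; exact allowedE,
   List.isChain_replicate_of_rel _ (srel_left_east _)⟩

noncomputable def fsplit (n : ℕ) : {l // IsPDPath (n + 2) l} →
    ({l // IsPDPath (n + 1) l} ⊕ {l // IsPDPath (n + 1) l}) ⊕ {l // IsPDPath n l} :=
  fun x =>
    match x with
    | ⟨[], h⟩ => absurd h.1 (by simp)
    | ⟨[_], h⟩ => absurd h.1 (by simp)
    | ⟨s :: t :: r, h⟩ =>
      if s = ((1 : ℤ), (0 : ℤ)) then .inl (.inl ⟨t :: r, path_tail h⟩)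
      else if s = ((0 : ℤ), (-1 : ℤ)) ∧ t = ((1 : ℤ), (0 : ℤ)) then .inr ⟨r, path_tail (path_tail h)⟩
      else .inl (.inr ⟨t :: r, path_tail h⟩)

noncomputable def gsplit (n : ℕ) :
    ({l // IsPDPath (n + 1) l} ⊕ {l // IsPDPath (n + 1) l}) ⊕ {l // IsPDPath n l} →
    {l // IsPDPath (n + 2) l} :=
  fun x =>
    match x with
    | .inl (.inl ⟨q, h⟩) => ⟨((1 : ℤ), (0 : ℤ)) :: q, path_cons h allowedE (fun t _ => srel_left_east t)⟩
    | .inl (.inr ⟨q, h⟩) =>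
      if hq : q.head? = some ((0 : ℤ), (-1 : ℤ)) then
        ⟨((0 : ℤ), (-1 : ℤ)) :: q, path_cons h allowedS (by
          intro t ht; rw [hq] at ht; simp only [Option.mem_some_iff] at ht; subst ht
          exact ⟨by rintro ⟨h, -⟩; simp at h, by rintro ⟨-, h⟩; simp at h⟩)⟩
      else
        ⟨((0 : ℤ), (1 : ℤ)) :: q, path_cons h allowedN (by
          intro t ht
          constructor
          · rintro ⟨-, rfl⟩; exact hq ht
          · rintro ⟨h, -⟩; simp at h)⟩
    | .inr ⟨r, h⟩ => ⟨((0 : ℤ), (-1 : ℤ)) :: ((1 : ℤ), (0 : ℤ)) :: r,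
        path_cons (path_cons h allowedE (fun t _ => srel_left_east t)) allowedS
          (by intro t ht; simp only [List.head?_cons, Option.mem_some_iff] at ht; subst ht
              exact srel_right_east _)⟩

lemma head_determined {n : ℕ} (s t : ℤ × ℤ) (l : List (ℤ × ℤ))
    (hp : IsPDPath (n + 2) (s :: t :: l)) (hne : s ≠ ((1:ℤ), (0:ℤ)))
    (hnst : ¬(s = ((0:ℤ), (-1:ℤ)) ∧ t = ((1:ℤ), (0:ℤ)))) :
    s = (if t = ((0:ℤ), (-1:ℤ)) then ((0:ℤ), (-1:ℤ)) else ((0:ℤ), (1:ℤ))) := by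
  have hs := hp.2.1 s (by simp)
  have ht := hp.2.1 t (by simp)
  have hrel : SRel s t := (List.isChain_cons_cons.1 hp.2.2).1
  rcases hs with rfl | rfl | rfl
  · rw [if_neg]
    intro hts
    exact hrel.1 ⟨rfl, hts⟩
  · rw [if_pos]
    rcases ht with rfl | rfl | rfl
    · exact absurd ⟨rfl, rfl⟩ hrel.2
    · rfl
    · exact absurd ⟨rfl, rfl⟩ hnst
  · exact absurd rfl hne

lemma gsplit_fsplit (n : ℕ) : ∀ x, gsplit n (fsplit n x) = x := by
  rintro ⟨l, h⟩
  match l, h with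
  | [], h => exact absurd h.1 (by simp)
  | [_], h => exact absurd h.1 (by simp)
  | s :: t :: r, h =>
    simp only [fsplit]
    split_ifs with c1 c2
    · subst c1; rfl
    · obtain ⟨rfl, rfl⟩ := c2; rfl
    · have hd := head_determined s t r h c1 c2
      simp only [gsplit, List.head?_cons]
      split_ifs with d
      · simp only [Option.some.injEq] at d
        rw [if_pos d] at hd
        subst d; subst hd; rfl
      · have d' : ¬(t = ((0:ℤ), (-1:ℤ))) := fun ht => d (by rw [ht])
        rw [if_neg d'] at hd
        subst hd; exact dif_neg d

lemma fsplit_gsplit (n : ℕ) : ∀ y, fsplit n (gsplit n y) = y := by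
  rintro ((⟨q, hq⟩ | ⟨q, hq⟩) | ⟨r, hr⟩)
  · match q, hq with
    | a :: q', hq =>
      simp [gsplit, fsplit]
  · match q, hq with
    | a :: q', hq =>
      simp only [gsplit, List.head?_cons]
      split_ifs with d
      · simp only [Option.some.injEq] at d
        subst d
        simp [fsplit]
      · have d' : ¬(a = ((0:ℤ), (-1:ℤ))) := fun ht => d (by rw [ht])
        simp [fsplit, d']
  · simp [gsplit, fsplit]

noncomputable def pathEquiv (n : ℕ) : {l // IsPDPath (n + 2) l} ≃
    ({l // IsPDPath (n + 1) l} ⊕ {l // IsPDPath (n + 1) l}) ⊕ {l // IsPDPath n l} :=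
  ⟨fsplit n, gsplit n, gsplit_fsplit n, fsplit_gsplit n⟩

lemma numPD_rec (n : ℕ) : numPD (n + 2) = 2 * numPD (n + 1) + numPD n := by
  have := Nat.card_congr (pathEquiv n)
  rw [Nat.card_sum, Nat.card_sum] at this
  rw [numPD, this, numPD, numPD]
  ring

lemma numPD_zero : numPD 0 = 1 := by
  rw [numPD]
  have : ∀ x : {l // IsPDPath 0 l}, x = ⟨[], by simp [IsPDPath, NoReversal, List.Chain']⟩ := by
    rintro ⟨l, h⟩
    exact Subtype.ext (List.length_eq_zero_iff.1 h.1)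
  have h1 : Nonempty {l // IsPDPath 0 l} := ⟨⟨[], by simp [IsPDPath, NoReversal, List.Chain']⟩⟩
  have h2 : Subsingleton {l // IsPDPath 0 l} := ⟨fun a b => by rw [this a, this b]⟩
  exact Nat.card_unique

lemma numPD_one : numPD 1 = 3 := by
  classical
  have e : {l // IsPDPath 1 l} ≃ {s : ℤ × ℤ // s ∈ ({(0, 1), (0, -1), (1, 0)} : Finset (ℤ × ℤ))} := by
    refine ⟨fun x => ⟨x.1.headI, ?_⟩, fun s => ⟨[s.1], ?_⟩, ?_, ?_⟩
    · obtain ⟨l, h⟩ := x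
      match l, h with
      | [s], h => exact stepFinset_mem (h.2.1 s (by simp))
    · refine ⟨by simp, ?_, List.isChain_singleton _⟩
      intro t ht
      simp only [List.mem_singleton] at ht
      subst ht
      have := s.2
      simp only [Finset.mem_insert, Finset.mem_singleton] at this
      rcases this with h | h | h
      · exact Or.inl h
      · exact Or.inr (Or.inl h)
      · exact Or.inr (Or.inr h)
    · rintro ⟨l, h⟩
      match l, h with
      | [s], h => rfl
    · rintro ⟨s, hs⟩
      rfl
  rw [numPD, Nat.card_congr e, Nat.card_eq_fintype_card, Fintype.card_coe]
  decide

end PDW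

namespace PDW

noncomputable abbrev phi : ℝ := 1 + Real.sqrt 2

lemma phi_pos : 0 < phi := by
  have := Real.sqrt_nonneg 2
  unfold phi; linarith

lemma one_lt_phi : 1 < phi := by
  have : 0 < Real.sqrt 2 := Real.sqrt_pos.2 (by norm_num)
  unfold phi; linarith

lemma phi_sq : phi ^ 2 = 2 * phi + 1 := by
  have h : Real.sqrt 2 ^ 2 = 2 := Real.sq_sqrt (by norm_num)
  unfold phi; ring_nf; nlinarith [h]

lemma phi_lt_3 : phi < 3 := by
  have h : Real.sqrt 2 < 2 := by
    nlinarith [Real.sq_sqrt (show (0:ℝ) ≤ 2 by norm_num), Real.sqrt_nonneg 2]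
  unfold phi; linarith

lemma numPD_bounds : ∀ n : ℕ, phi ^ n ≤ (numPD n : ℝ) ∧ (numPD n : ℝ) ≤ phi ^ (n + 1) := by
  intro n
  induction n using Nat.strong_induction_on with
  | _ n ih =>
    match n with
    | 0 =>
      rw [numPD_zero]
      constructor
      · simp
      · push_cast; simpa using le_of_lt one_lt_phi
    | 1 =>
      rw [numPD_one]
      constructor
      · push_cast; linarith [phi_lt_3]
      · push_cast
        nlinarith [one_lt_phi, phi_sq]
    | (n + 2) =>
      obtain ⟨h1l, h1u⟩ := ih (n + 1) (by omega)
      obtain ⟨h2l, h2u⟩ := ih n (by omega)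
      rw [numPD_rec]
      have hp : (0:ℝ) ≤ phi ^ n := le_of_lt (pow_pos phi_pos n)
      have e1 : phi ^ (n + 2) = phi ^ n * (2 * phi + 1) := by rw [← phi_sq]; ring
      have e2 : phi ^ (n + 3) = phi ^ (n + 1) * (2 * phi + 1) := by rw [← phi_sq]; ring
      have hp1 : (0:ℝ) ≤ phi ^ (n + 1) := le_of_lt (pow_pos phi_pos _)
      constructor
      · push_cast
        rw [e1]
        have : phi ^ (n+1) = phi ^ n * phi := by ring
        nlinarith [one_lt_phi]
      · push_cast
        have : (n + 2 + 1) = n + 3 := by ring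
        rw [this, e2]
        have : phi ^ (n+2) = phi ^ (n+1) * phi := by ring
        nlinarith [one_lt_phi]

/-! ### counts by endpoint height -/

noncomputable def dEnd (n : ℕ) (h : ℤ) : ℕ :=
  Nat.card {l : List (ℤ × ℤ) // IsPDPath n l ∧ l.sum.2 = h}

instance instFiniteDEnd (n : ℕ) (h : ℤ) : Finite {l // IsPDPath n l ∧ l.sum.2 = h} :=
  finite_paths (fun _ h => ⟨h.1.1, h.1.2.1⟩)

instance instFiniteHalfEnd (n : ℕ) :
    Finite {l : List (ℤ × ℤ) // IsPDPath n l ∧ (∀ q ∈ pathVertices l, 0 ≤ q.2) ∧ l.sum.2 = 0} :=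
  finite_paths (fun _ h => ⟨h.1.1, h.1.2.1⟩)

instance instFiniteSym (p n : ℕ) :
    Finite {l : List (ℤ × ℤ) // IsPDPath n l ∧ ∀ q ∈ pathVertices l, InSymWedge p q} :=
  finite_paths (fun _ h => ⟨h.1.1, h.1.2.1⟩)

instance instFiniteAsym (p n : ℕ) :
    Finite {l : List (ℤ × ℤ) // IsPDPath n l ∧ ∀ q ∈ pathVertices l, InAsymWedge p q} :=
  finite_paths (fun _ h => ⟨h.1.1, h.1.2.1⟩)

/-- split the full count by endpoint height -/
lemma numPD_le_sum_dEnd (n : ℕ) :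
    numPD n ≤ ∑ h ∈ Finset.Icc (-(n:ℤ)) (n:ℤ), dEnd n h := by
  classical
  have hmem : ∀ x : {l // IsPDPath n l}, x.1.sum.2 ∈ Finset.Icc (-(n:ℤ)) (n:ℤ) := by
    intro x
    obtain ⟨-, -, h3, h4⟩ := psum_bounds x.2.2.1
    rw [Finset.mem_Icc]
    rw [x.2.1] at h3 h4
    exact ⟨h3, h4⟩
  let F : {l // IsPDPath n l} →
      Σ h : (Finset.Icc (-(n:ℤ)) (n:ℤ)), {l // IsPDPath n l ∧ l.sum.2 = (h : ℤ)} :=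
    fun x => ⟨⟨x.1.sum.2, hmem x⟩, ⟨x.1, x.2, rfl⟩⟩
  have hF : Function.Injective F := by
    rintro ⟨l, h⟩ ⟨l', h'⟩ hEq
    have := congrArg (fun z : (Σ h : (Finset.Icc (-(n:ℤ)) (n:ℤ)),
      {l // IsPDPath n l ∧ l.sum.2 = (h : ℤ)}) => z.2.1) hEq
    exact Subtype.ext (by exact this)
  letI : ∀ h : (Finset.Icc (-(n:ℤ)) (n:ℤ)), Fintype {l // IsPDPath n l ∧ l.sum.2 = (h : ℤ)} :=
    fun h => Fintype.ofFinite _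
  have hle := Nat.card_le_card_of_injective F hF
  have hnum : numPD n = Nat.card {l // IsPDPath n l} := rfl
  rw [hnum]
  refine hle.trans ?_
  rw [Nat.card_eq_fintype_card, Fintype.card_sigma]
  rw [← Finset.sum_coe_sort (Finset.Icc (-(n:ℤ)) (n:ℤ)) (fun h => dEnd n h)]
  refine le_of_eq (Finset.sum_congr rfl ?_)
  intro h _
  rw [dEnd, Nat.card_eq_fintype_card]

lemma exists_popular_height (n : ℕ) :
    ∃ h : ℤ, numPD n ≤ (2 * n + 1) * dEnd n h := by
  obtain ⟨h₀, hmem, hmax⟩ := Finset.exists_max_image (Finset.Icc (-(n:ℤ)) (n:ℤ)) (dEnd n)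
    ⟨0, by rw [Finset.mem_Icc]; constructor <;> simp⟩
  refine ⟨h₀, ?_⟩
  have h1 : numPD n ≤ ∑ h ∈ Finset.Icc (-(n:ℤ)) (n:ℤ), dEnd n h := numPD_le_sum_dEnd n
  have h2 : ∑ h ∈ Finset.Icc (-(n:ℤ)) (n:ℤ), dEnd n h ≤ (2 * n + 1) * dEnd n h₀ := by
    calc ∑ h ∈ Finset.Icc (-(n:ℤ)) (n:ℤ), dEnd n h
        ≤ ∑ _h ∈ Finset.Icc (-(n:ℤ)) (n:ℤ), dEnd n h₀ := Finset.sum_le_sum hmax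
      _ = (Finset.Icc (-(n:ℤ)) (n:ℤ)).card * dEnd n h₀ := by rw [Finset.sum_const, smul_eq_mul]
      _ = (2 * n + 1) * dEnd n h₀ := by rw [Int.card_Icc]; congr 1; omega
  exact h1.trans h2

end PDW

namespace PDW

/-! ### prefix sums toolkit -/

def Ysum (l : List (ℤ × ℤ)) (j : ℕ) : ℤ := ((l.take j).sum).2

lemma sum_take_append (l1 l2 : List (ℤ × ℤ)) (j : ℕ) :
    ((l1 ++ l2).take j).sum = (l1.take j).sum + (l2.take (j - l1.length)).sum := by
  rw [List.take_append, List.sum_append]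

lemma sum_take_drop (l : List (ℤ × ℤ)) (i j : ℕ) :
    ((l.drop i).take j).sum = (l.take (i + j)).sum - (l.take i).sum := by
  have := List.take_add (l := l) (i := i) (j := j)
  have h2 : (l.take (i+j)).sum = (l.take i).sum + ((l.drop i).take j).sum := by
    rw [this, List.sum_append]
  rw [h2]; abel

lemma sum_drop (l : List (ℤ × ℤ)) (i : ℕ) :
    (l.drop i).sum = l.sum - (l.take i).sum := by
  conv_lhs => rw [show l.drop i = l.drop i from rfl]
  have : (l.take i ++ l.drop i).sum = l.sum := by rw [List.take_append_drop]
  rw [List.sum_append] at this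
  linear_combination (norm := abel) this

lemma Ysum_take_of_le {l : List (ℤ × ℤ)} {j : ℕ} (h : l.length ≤ j) :
    Ysum l j = l.sum.2 := by
  rw [Ysum, List.take_of_length_le h]

lemma Ysum_abs_le {l : List (ℤ × ℤ)} (hl : ∀ s ∈ l, AllowedStep s) (j : ℕ) :
    -(j:ℤ) ≤ Ysum l j ∧ Ysum l j ≤ j := by
  have hall : ∀ s ∈ l.take j, AllowedStep s := fun s hs => hl s ((List.take_sublist _ _).subset hs)
  obtain ⟨-, -, h3, h4⟩ := psum_bounds hall
  have hlen : ((l.take j).length : ℤ) ≤ j := by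
    have := List.length_take (i := j) (l := l)
    simp only [this]
    exact_mod_cast Nat.min_le_left _ _
  exact ⟨le_trans (by omega) h3, le_trans h4 hlen⟩

lemma Xsum_nonneg {l : List (ℤ × ℤ)} (hl : ∀ s ∈ l, AllowedStep s) (j : ℕ) :
    0 ≤ ((l.take j).sum).1 :=
  (psum_bounds (fun s hs => hl s ((List.take_sublist _ _).subset hs))).1

/-! ### reflection pairing -/

def reflStep (s : ℤ × ℤ) : ℤ × ℤ := (s.1, -s.2)

lemma reflStep_allowed {s : ℤ × ℤ} (h : AllowedStep s) : AllowedStep (reflStep s) := by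
  rcases h with rfl | rfl | rfl
  · exact allowedS
  · exact Or.inl (by simp [reflStep])
  · exact allowedE

lemma reflStep_invol (s : ℤ × ℤ) : reflStep (reflStep s) = s := by simp [reflStep]

lemma reflStep_srel {s t : ℤ × ℤ} (h : SRel s t) : SRel (reflStep s) (reflStep t) := by
  have e1 : ∀ u : ℤ × ℤ, reflStep u = ((0:ℤ), (1:ℤ)) → u = ((0:ℤ), (-1:ℤ)) := by
    intro u hu
    have := congrArg reflStep hu
    rw [reflStep_invol] at this
    rw [this]; rfl
  have e2 : ∀ u : ℤ × ℤ, reflStep u = ((0:ℤ), (-1:ℤ)) → u = ((0:ℤ), (1:ℤ)) := by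
    intro u hu
    have := congrArg reflStep hu
    rw [reflStep_invol] at this
    rw [this]; rfl
  obtain ⟨h1, h2⟩ := h
  constructor
  · rintro ⟨hs, ht⟩
    exact h2 ⟨e1 s hs, e2 t ht⟩
  · rintro ⟨hs, ht⟩
    exact h1 ⟨e2 s hs, e1 t ht⟩



lemma reflPath_sum_snd (l : List (ℤ × ℤ)) : ((l.map reflStep).sum).2 = -l.sum.2 := by
  induction l with
  | nil => simp
  | cons x xs ih => simp [Prod.snd_add, ih, reflStep]; ring

lemma reflPath_invol (q : List (ℤ × ℤ)) : (q.map reflStep).map reflStep = q := by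
  induction q with
  | nil => rfl
  | cons x xs ih => simp [ih, reflStep_invol]

lemma pairing (n : ℕ) (h : ℤ) : dEnd n h * dEnd n h ≤ dEnd (2 * n + 1) 0 := by
  classical
  set A := {l : List (ℤ × ℤ) // IsPDPath n l ∧ l.sum.2 = h} with hA
  let F : A × A → {l : List (ℤ × ℤ) // IsPDPath (2 * n + 1) l ∧ l.sum.2 = 0} := fun x =>
    ⟨x.1.1 ++ ((1 : ℤ), (0 : ℤ)) :: (x.2.1.map reflStep), by
      obtain ⟨⟨P, hP, hPs⟩, ⟨Q, hQ, hQs⟩⟩ := x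
      refine ⟨⟨?_, ?_, ?_⟩, ?_⟩
      · simp [hP.1, hQ.1]; omega
      · intro s hs
        rcases List.mem_append.1 hs with hs | hs
        · exact hP.2.1 s hs
        · rcases List.mem_cons.1 hs with rfl | hs
          · exact allowedE
          · obtain ⟨t, ht, rfl⟩ := List.mem_map.1 hs
            exact reflStep_allowed (hQ.2.1 t ht)
      · refine List.isChain_append.2 ⟨hP.2.2, ?_, ?_⟩
        · refine List.isChain_cons.2 ⟨fun y _ => srel_left_east y, ?_⟩
          rw [List.isChain_map]
          exact List.IsChain.imp (fun a b hab => reflStep_srel hab) hQ.2.2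
        · intro x _ y hy
          simp only [List.head?_cons, Option.mem_some_iff] at hy
          subst hy
          exact srel_right_east x
      · show (P ++ ((1 : ℤ), (0 : ℤ)) :: (Q.map reflStep)).sum.2 = 0
        rw [List.sum_append, Prod.snd_add, List.sum_cons, Prod.snd_add, hPs,
          reflPath_sum_snd, hQs]
        simp⟩
  have hF : Function.Injective F := by
    rintro ⟨⟨P, hP⟩, ⟨Q, hQ⟩⟩ ⟨⟨P', hP'⟩, ⟨Q', hQ'⟩⟩ hEq
    have hlist : P ++ ((1 : ℤ), (0 : ℤ)) :: (Q.map reflStep)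
        = P' ++ ((1 : ℤ), (0 : ℤ)) :: (Q'.map reflStep) := congrArg Subtype.val hEq
    have hPeq : P = P' := by
      have t1 := congrArg (List.take n) hlist
      rwa [List.take_left' hP.1.1, List.take_left' hP'.1.1] at t1
    have hQeq : Q.map reflStep = Q'.map reflStep := by
      have t2 := congrArg (List.drop n) hlist
      rw [List.drop_left' hP.1.1, List.drop_left' hP'.1.1] at t2
      exact List.tail_eq_of_cons_eq t2
    have : Q = Q' := by
      have := congrArg (List.map reflStep) hQeq
      rwa [reflPath_invol, reflPath_invol] at this
    subst hPeq; subst this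
    rfl
  have := Nat.card_le_card_of_injective F hF
  rw [Nat.card_prod] at this
  exact this

/-! ### rotation -/

instance decYsumPred (l : List (ℤ × ℤ)) (N : ℕ) :
    DecidablePred (fun j => ∀ k ∈ Finset.range (N + 1), Ysum l j ≤ Ysum l k) :=
  fun _ => Finset.decidableDforallFinset

lemma argmin_filter_nonempty (l : List (ℤ × ℤ)) (N : ℕ) :
    ((Finset.range (N + 1)).filter
      (fun j => ∀ k ∈ Finset.range (N + 1), Ysum l j ≤ Ysum l k)).Nonempty := by
  obtain ⟨j, hj, hmin⟩ := Finset.exists_min_image (Finset.range (N + 1))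
    (fun j => Ysum l j) ⟨0, by simp⟩
  exact ⟨j, Finset.mem_filter.2 ⟨hj, hmin⟩⟩

noncomputable def argmin (l : List (ℤ × ℤ)) (N : ℕ) : ℕ :=
  ((Finset.range (N + 1)).filter
    (fun j => ∀ k ∈ Finset.range (N + 1), Ysum l j ≤ Ysum l k)).min'
    (argmin_filter_nonempty l N)

lemma argmin_spec (l : List (ℤ × ℤ)) (N : ℕ) :
    argmin l N ≤ N ∧ ∀ k ≤ N, Ysum l (argmin l N) ≤ Ysum l k := by
  have h : argmin l N ∈ (Finset.range (N + 1)).filter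
      (fun j => ∀ k ∈ Finset.range (N + 1), Ysum l j ≤ Ysum l k) :=
    Finset.min'_mem _ (argmin_filter_nonempty l N)
  rw [Finset.mem_filter, Finset.mem_range] at h
  exact ⟨by omega, fun k hk => h.2 k (Finset.mem_range.2 (by omega))⟩

def rotList (l : List (ℤ × ℤ)) (i : ℕ) : List (ℤ × ℤ) :=
  l.drop i ++ ((1 : ℤ), (0 : ℤ)) :: l.take i

lemma argmin_glob {l : List (ℤ × ℤ)} {N : ℕ} (hlen : l.length = N) (h0 : l.sum.2 = 0) :
    ∀ k, Ysum l (argmin l N) ≤ Ysum l k := by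
  intro k
  obtain ⟨h1, h2⟩ := argmin_spec l N
  by_cases hk : k ≤ N
  · exact h2 k hk
  · have hk0 : Ysum l k = 0 := by rw [Ysum_take_of_le (by omega), h0]
    rw [hk0]
    have hN := h2 N le_rfl
    rwa [Ysum_take_of_le (le_of_eq hlen), h0] at hN

lemma rot_is {N : ℕ} {l : List (ℤ × ℤ)} (h : IsPDPath N l) (h0 : l.sum.2 = 0) :
    IsPDPath (N + 1) (rotList l (argmin l N)) ∧
    (∀ q ∈ pathVertices (rotList l (argmin l N)), 0 ≤ q.2) ∧
    (rotList l (argmin l N)).sum.2 = 0 := by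
  set i := argmin l N with hi
  obtain ⟨hiN, -⟩ := argmin_spec l N
  have hmin := argmin_glob h.1 h0
  have hlen : l.length = N := h.1
  constructor
  · refine ⟨?_, ?_, ?_⟩
    · simp [rotList]; omega
    · intro s hs
      rcases List.mem_append.1 hs with hs | hs
      · exact h.2.1 s ((List.drop_sublist _ _).subset hs)
      · rcases List.mem_cons.1 hs with rfl | hs
        · exact allowedE
        · exact h.2.1 s ((List.take_sublist _ _).subset hs)
    · refine List.isChain_append.2 ⟨h.2.2.drop i, List.isChain_cons.2
        ⟨fun y _ => srel_left_east y, h.2.2.take i⟩, ?_⟩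
      intro x _ y hy
      simp only [List.head?_cons, Option.mem_some_iff] at hy
      subst hy
      exact srel_right_east x
  have hmini : ∀ k, Ysum l i ≤ Ysum l k := by rw [hi]; exact hmin
  constructor
  · rw [vertices_prop_iff]
    intro j _
    rw [show ((rotList l i).take j).sum = _ from sum_take_append _ _ j]
    by_cases hj : j ≤ (l.drop i).length
    · rw [Nat.sub_eq_zero_of_le hj]
      simp only [List.take_zero, List.sum_nil, add_zero]
      rw [sum_take_drop l i j, Prod.snd_sub]
      have := hmini (i + j)
      unfold Ysum at this
      omega
    · have hsub : j - (l.drop i).length = (j - (l.drop i).length - 1) + 1 := by omega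
      rw [hsub, List.take_succ_cons, List.sum_cons]
      rw [List.take_of_length_le (by omega), sum_drop, List.take_take]
      simp only [Prod.snd_add, Prod.snd_sub]
      have h1 := hmini (min (j - (l.drop i).length - 1) i)
      have h2 := hmini i
      unfold Ysum at h1 h2
      rw [h0]
      omega
  · rw [rotList, List.sum_append, List.sum_cons, sum_drop]
    simp only [Prod.snd_add, Prod.snd_sub]
    rw [h0]
    ring

lemma rotation_bound (N : ℕ) :
    dEnd N 0 ≤ (N + 1) * numPDhalfEnd0 (N + 1) := by
  classical
  let F : {l : List (ℤ × ℤ) // IsPDPath N l ∧ l.sum.2 = 0} →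
      Fin (N + 1) × {l : List (ℤ × ℤ) //
        IsPDPath (N + 1) l ∧ (∀ q ∈ pathVertices l, 0 ≤ q.2) ∧ l.sum.2 = 0} := fun x =>
    ⟨⟨argmin x.1 N, by have := (argmin_spec x.1 N).1; omega⟩,
     ⟨rotList x.1 (argmin x.1 N), rot_is x.2.1 x.2.2⟩⟩
  have hF : Function.Injective F := by
    rintro ⟨l, hl⟩ ⟨l', hl'⟩ hEq
    have h1 : argmin l N = argmin l' N := by
      have := congrArg (fun z : Fin (N + 1) × {l : List (ℤ × ℤ) //
        IsPDPath (N + 1) l ∧ (∀ q ∈ pathVertices l, 0 ≤ q.2) ∧ l.sum.2 = 0} => (z.1 : ℕ)) hEq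
      exact this
    have h2 : rotList l (argmin l N) = rotList l' (argmin l' N) := by
      have := congrArg (fun z : Fin (N + 1) × {l : List (ℤ × ℤ) //
        IsPDPath (N + 1) l ∧ (∀ q ∈ pathVertices l, 0 ≤ q.2) ∧ l.sum.2 = 0} => z.2.1) hEq
      exact this
    rw [← h1] at h2
    set i := argmin l N with hi
    have hlen : l.length = N := hl.1.1
    have hlen' : l'.length = N := hl'.1.1
    have hdl : (l.drop i).length = N - i := by rw [List.length_drop, hlen]
    have hdl' : (l'.drop i).length = N - i := by rw [List.length_drop, hlen']
    have hd : l.drop i = l'.drop i := by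
      have := congrArg (List.take (N - i)) h2
      rwa [rotList, rotList, List.take_left' hdl, List.take_left' hdl'] at this
    have ht : l.take i = l'.take i := by
      have := congrArg (List.drop (N - i)) h2
      rw [rotList, rotList, List.drop_left' hdl, List.drop_left' hdl'] at this
      exact List.tail_eq_of_cons_eq this
    have : l = l' := by
      rw [← List.take_append_drop i l, ← List.take_append_drop i l', ht, hd]
    exact Subtype.ext this
  have hcard := Nat.card_le_card_of_injective F hF
  rw [Nat.card_prod] at hcard
  have : Nat.card (Fin (N + 1)) = N + 1 := by
    rw [Nat.card_eq_fintype_card, Fintype.card_fin]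
  rw [this] at hcard
  exact hcard

end PDW

namespace PDW

/-- the three headline counting facts chained together -/
lemma loops_lower (n : ℕ) :
    numPD n ^ 2 ≤ (2 * n + 3) ^ 3 * numPDhalfEnd0 (2 * n + 2) := by
  obtain ⟨h, hpop⟩ := exists_popular_height n
  have h1 : numPD n ^ 2 ≤ (2 * n + 1) ^ 2 * (dEnd n h * dEnd n h) := by
    calc numPD n ^ 2 ≤ ((2 * n + 1) * dEnd n h) ^ 2 := Nat.pow_le_pow_left hpop 2
      _ = (2 * n + 1) ^ 2 * (dEnd n h * dEnd n h) := by ring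
  have h2 : dEnd n h * dEnd n h ≤ dEnd (2 * n + 1) 0 := pairing n h
  have h3 : dEnd (2 * n + 1) 0 ≤ (2 * n + 2) * numPDhalfEnd0 (2 * n + 2) := by
    have := rotation_bound (2 * n + 1)
    convert this using 2 <;> omega
  calc numPD n ^ 2 ≤ (2 * n + 1) ^ 2 * (dEnd n h * dEnd n h) := h1
    _ ≤ (2 * n + 1) ^ 2 * ((2 * n + 2) * numPDhalfEnd0 (2 * n + 2)) :=
        Nat.mul_le_mul_left _ (h2.trans h3)
    _ = ((2 * n + 1) ^ 2 * (2 * n + 2)) * numPDhalfEnd0 (2 * n + 2) := by ring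
    _ ≤ (2 * n + 3) ^ 3 * numPDhalfEnd0 (2 * n + 2) := by
        apply Nat.mul_le_mul_right
        nlinarith

/-! ### wedge constructions -/

def TailGood (L k : ℕ) (l : List (ℤ × ℤ)) : Prop :=
  IsPDPath (k * (L + 1)) l ∧ (∀ j, 0 ≤ Ysum l j ∧ Ysum l j ≤ L) ∧ l.sum.2 = 0

instance instFiniteTail (L k : ℕ) : Finite {l // TailGood L k l} :=
  finite_paths (fun _ h => ⟨h.1.1, h.1.2.1⟩)

lemma loop_Y {L : ℕ} {q : List (ℤ × ℤ)}
    (h : IsPDPath L q ∧ (∀ v ∈ pathVertices q, 0 ≤ v.2) ∧ q.sum.2 = 0) :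
    ∀ j, 0 ≤ Ysum q j ∧ Ysum q j ≤ L := by
  intro j
  have hlen : q.length = L := h.1.1
  by_cases hj : j ≤ L
  · have h0 : 0 ≤ Ysum q j := by
      have := (vertices_prop_iff.1 h.2.1) (min j q.length) (Nat.min_le_right _ _)
      rw [show q.take (min j q.length) = q.take j from by
        rcases Nat.le_total j q.length with hle | hle
        · rw [Nat.min_eq_left hle]
        · rw [Nat.min_eq_right hle, List.take_length, List.take_of_length_le hle]] at this
      exact this
    refine ⟨h0, ?_⟩
    have := (Ysum_abs_le h.1.2.1 j).2
    omega
  · have : Ysum q j = 0 := by rw [Ysum_take_of_le (by omega), h.2.2]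
    rw [this]
    exact ⟨le_rfl, by positivity⟩

lemma tail_card (L k : ℕ) : numPDhalfEnd0 L ^ k ≤ Nat.card {l // TailGood L k l} := by
  induction k with
  | zero =>
    have : Nonempty {l // TailGood L 0 l} := ⟨⟨[], ⟨by simp, by simp, by
        simp [NoReversal, List.Chain']⟩, fun j => by simp [Ysum], by simp⟩⟩
    exact Nat.card_pos
  | succ k ih =>
    set A := {l : List (ℤ × ℤ) //
      IsPDPath L l ∧ (∀ q ∈ pathVertices l, 0 ≤ q.2) ∧ l.sum.2 = 0}
    let G : A × {l // TailGood L k l} → {l // TailGood L (k + 1) l} := fun x =>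
      ⟨x.1.1 ++ ((1 : ℤ), (0 : ℤ)) :: x.2.1, by
        obtain ⟨⟨q, hq⟩, ⟨t, ht⟩⟩ := x
        have hqlen : q.length = L := hq.1.1
        have htlen : t.length = k * (L + 1) := ht.1.1
        refine ⟨⟨?_, ?_, ?_⟩, ?_, ?_⟩
        · simp [hqlen, htlen]; ring
        · intro s hs
          rcases List.mem_append.1 hs with hs | hs
          · exact hq.1.2.1 s hs
          · rcases List.mem_cons.1 hs with rfl | hs
            · exact allowedE
            · exact ht.1.2.1 s hs
        · refine List.isChain_append.2 ⟨hq.1.2.2, List.isChain_cons.2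
            ⟨fun y _ => srel_left_east y, ht.1.2.2⟩, ?_⟩
          intro x _ y hy
          simp only [List.head?_cons, Option.mem_some_iff] at hy
          subst hy
          exact srel_right_east x
        · intro j
          have key : Ysum (q ++ ((1 : ℤ), (0 : ℤ)) :: t) j
              = Ysum q j + ((((1 : ℤ), (0 : ℤ)) :: t).take (j - L)).sum.2 := by
            rw [Ysum, sum_take_append, Prod.snd_add, hqlen]; rfl
          rw [key]
          by_cases hj : j ≤ L
          · rw [Nat.sub_eq_zero_of_le hj]
            simp only [List.take_zero, List.sum_nil, Prod.snd_zero, add_zero]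
            exact loop_Y hq j
          · have hq0 : Ysum q j = 0 := by rw [Ysum_take_of_le (by omega), hq.2.2]
            have hsub : j - L = (j - L - 1) + 1 := by omega
            rw [hq0, hsub, List.take_succ_cons, List.sum_cons]
            simp only [Prod.snd_add, zero_add]
            have := ht.2.1 (j - L - 1)
            unfold Ysum at this
            constructor
            · omega
            · omega
        · rw [List.sum_append, List.sum_cons]
          simp only [Prod.snd_add]
          rw [hq.2.2, ht.2.2]
          simp⟩
    have hG : Function.Injective G := by
      rintro ⟨⟨q, hq⟩, ⟨t, ht⟩⟩ ⟨⟨q', hq'⟩, ⟨t', ht'⟩⟩ hEq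
      have hlist : q ++ ((1 : ℤ), (0 : ℤ)) :: t = q' ++ ((1 : ℤ), (0 : ℤ)) :: t' :=
        congrArg Subtype.val hEq
      have hq1 : q = q' := by
        have := congrArg (List.take L) hlist
        rwa [List.take_left' hq.1.1, List.take_left' hq'.1.1] at this
      have ht1 : t = t' := by
        have := congrArg (List.drop L) hlist
        rw [List.drop_left' hq.1.1, List.drop_left' hq'.1.1] at this
        exact List.tail_eq_of_cons_eq this
      subst hq1; subst ht1; rfl
    have hcard := Nat.card_le_card_of_injective G hG
    rw [Nat.card_prod] at hcard
    calc numPDhalfEnd0 L ^ (k + 1) = numPDhalfEnd0 L * numPDhalfEnd0 L ^ k := by ring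
      _ ≤ numPDhalfEnd0 L * Nat.card {l // TailGood L k l} := Nat.mul_le_mul_left _ ih
      _ ≤ Nat.card {l // TailGood L (k + 1) l} := hcard

lemma replicate_east_sum (m : ℕ) :
    (List.replicate m ((1 : ℤ), (0 : ℤ))).sum = ((m : ℤ), (0 : ℤ)) := by
  induction m with
  | zero => simp; rfl
  | succ m ih =>
    rw [List.replicate_succ, List.sum_cons, ih]
    rw [Prod.ext_iff]
    constructor <;> simp <;> ring

lemma replicate_getLast_east {m : ℕ} {x : ℤ × ℤ}
    (hx : x ∈ (List.replicate m ((1 : ℤ), (0 : ℤ))).getLast?) : x = ((1 : ℤ), (0 : ℤ)) := by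
  have := List.mem_of_mem_getLast? hx
  exact List.eq_of_mem_replicate this

lemma wedge_lower {p : ℕ} (hp : 1 ≤ p) (L k : ℕ) :
    numPDhalfEnd0 L ^ k ≤ numPDasym p (L + k * (L + 1)) := by
  refine (tail_card L k).trans ?_
  let W : {l // TailGood L k l} →
      {l : List (ℤ × ℤ) // IsPDPath (L + k * (L + 1)) l ∧
        ∀ q ∈ pathVertices l, InAsymWedge p q} := fun x =>
    ⟨List.replicate L ((1 : ℤ), (0 : ℤ)) ++ x.1, by
      obtain ⟨t, ht⟩ := x
      have htlen : t.length = k * (L + 1) := ht.1.1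
      refine ⟨⟨?_, ?_, ?_⟩, ?_⟩
      · simp [htlen]
      · intro s hs
        rcases List.mem_append.1 hs with hs | hs
        · rw [List.eq_of_mem_replicate hs]; exact allowedE
        · exact ht.1.2.1 s hs
      · refine List.isChain_append.2 ⟨List.isChain_replicate_of_rel _ (srel_left_east _),
          ht.1.2.2, ?_⟩
        intro x hx y _
        rw [replicate_getLast_east hx]
        exact srel_left_east y
      · rw [vertices_prop_iff]
        intro j _
        rw [sum_take_append]
        rw [List.take_replicate, replicate_east_sum, List.length_replicate]
        have hX : 0 ≤ ((t.take (j - L)).sum).1 := Xsum_nonneg ht.1.2.1 _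
        have hY := ht.2.1 (j - L)
        unfold Ysum at hY
        refine ⟨?_, ?_, ?_⟩
        · simp only [Prod.fst_add]
          have : (0:ℤ) ≤ (min j L : ℤ) := by positivity
          omega
        · simp only [Prod.snd_add]
          omega
        · simp only [Prod.fst_add, Prod.snd_add]
          by_cases hj : j ≤ L
          · have h0 : j - L = 0 := by omega
            rw [h0]
            simp only [List.take_zero, List.sum_nil, Prod.snd_zero, Prod.fst_zero, add_zero]
            positivity
          · have hmin : min j L = L := by omega
            rw [hmin]
            have hL : (L : ℤ) ≤ (L : ℤ) + ((t.take (j - L)).sum).1 := by omega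
            have hp' : (1 : ℤ) ≤ (p : ℤ) := by exact_mod_cast hp
            have hLp : (L : ℤ) ≤ (p : ℤ) * ((L : ℤ) + ((t.take (j - L)).sum).1) := by
              nlinarith
            omega⟩
  have hW : Function.Injective W := by
    rintro ⟨t, ht⟩ ⟨t', ht'⟩ hEq
    have hlist := congrArg Subtype.val hEq
    have := congrArg (List.drop L) hlist
    rw [List.drop_left' (by simp), List.drop_left' (by simp)] at this
    exact Subtype.ext this
  exact Nat.card_le_card_of_injective W hW

/-! ### comparisons and monotonicity -/

lemma asym_le_sym (p n : ℕ) : numPDasym p n ≤ numPDsym p n := by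
  let F : {l : List (ℤ × ℤ) // IsPDPath n l ∧ ∀ q ∈ pathVertices l, InAsymWedge p q} →
      {l : List (ℤ × ℤ) // IsPDPath n l ∧ ∀ q ∈ pathVertices l, InSymWedge p q} := fun x =>
    ⟨x.1, x.2.1, fun q hq => by
      obtain ⟨h1, h2, h3⟩ := x.2.2 q hq
      refine ⟨h1, ?_, h3⟩
      have : (0:ℤ) ≤ (p : ℤ) * q.1 := by positivity
      linarith⟩
  have hF : Function.Injective F := by
    rintro a b h
    have h1 : (F a).1 = (F b).1 := congrArg Subtype.val h
    exact Subtype.ext h1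
  exact Nat.card_le_card_of_injective F hF

lemma sym_le_numPD (p n : ℕ) : numPDsym p n ≤ numPD n := by
  let F : {l : List (ℤ × ℤ) // IsPDPath n l ∧ ∀ q ∈ pathVertices l, InSymWedge p q} →
      {l : List (ℤ × ℤ) // IsPDPath n l} := fun x => ⟨x.1, x.2.1⟩
  have hF : Function.Injective F := by
    rintro a b h
    have h1 : (F a).1 = (F b).1 := congrArg Subtype.val h
    exact Subtype.ext h1
  exact Nat.card_le_card_of_injective F hF

lemma numPDasym_mono (p : ℕ) : Monotone (numPDasym p) := by
  apply monotone_nat_of_le_succ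
  intro n
  let F : {l : List (ℤ × ℤ) // IsPDPath n l ∧ ∀ q ∈ pathVertices l, InAsymWedge p q} →
      {l : List (ℤ × ℤ) // IsPDPath (n + 1) l ∧ ∀ q ∈ pathVertices l, InAsymWedge p q} := fun x =>
    ⟨x.1 ++ [((1 : ℤ), (0 : ℤ))], by
      obtain ⟨l, hl, hw⟩ := x
      refine ⟨⟨by simp [hl.1], ?_, ?_⟩, ?_⟩
      · intro s hs
        rcases List.mem_append.1 hs with hs | hs
        · exact hl.2.1 s hs
        · rw [List.mem_singleton.1 hs]; exact allowedE
      · refine List.isChain_append.2 ⟨hl.2.2, List.isChain_singleton _, ?_⟩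
        intro x _ y hy
        simp only [List.head?_cons, Option.mem_some_iff] at hy
        subst hy
        exact srel_right_east x
      · rw [vertices_prop_iff]
        intro j _
        rw [sum_take_append]
        by_cases hj : j ≤ l.length
        · rw [Nat.sub_eq_zero_of_le hj]
          simp only [List.take_zero, List.sum_nil, add_zero]
          exact (vertices_prop_iff.1 hw) j hj
        · have h1 : ([((1 : ℤ), (0 : ℤ))].take (j - l.length)).sum = ((1 : ℤ), (0 : ℤ)) := by
            have : j - l.length = (j - l.length - 1) + 1 := by omega
            rw [this, List.take_succ_cons]
            simp
          rw [h1, List.take_of_length_le (show l.length ≤ j by omega)]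
          have hw' := (vertices_prop_iff.1 hw) l.length le_rfl
          rw [List.take_of_length_le le_rfl] at hw'
          obtain ⟨w1, w2, w3⟩ := hw'
          refine ⟨by simp [Prod.fst_add]; omega, by simp [Prod.snd_add]; omega, ?_⟩
          simp only [Prod.fst_add, Prod.snd_add]
          have hple : (p:ℤ) * l.sum.1 ≤ (p:ℤ) * (l.sum.1 + 1) := by
            have : (0:ℤ) ≤ (p:ℤ) := by positivity
            nlinarith
          omega⟩
  have hF : Function.Injective F := by
    rintro ⟨l, hl⟩ ⟨l', hl'⟩ hEq
    have h2 : l ++ [((1 : ℤ), (0 : ℤ))] = l' ++ [((1 : ℤ), (0 : ℤ))] := by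
      exact congrArg Subtype.val hEq
    exact Subtype.ext (List.append_cancel_right h2)
  exact Nat.card_le_card_of_injective F hF

lemma numPDasym_pos (p n : ℕ) : 1 ≤ numPDasym p n := by
  have : Nonempty {l : List (ℤ × ℤ) // IsPDPath n l ∧ ∀ q ∈ pathVertices l, InAsymWedge p q} := by
    refine ⟨⟨List.replicate n ((1 : ℤ), (0 : ℤ)), eastPath_is, ?_⟩⟩
    rw [vertices_prop_iff]
    intro j _
    rw [List.take_replicate, replicate_east_sum]
    refine ⟨by positivity, le_rfl, by positivity⟩
  exact Nat.card_pos

end PDW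

namespace PDW

open Filter

lemma numPDhalfEnd0_pos (L : ℕ) : 1 ≤ numPDhalfEnd0 L := by
  have : Nonempty {l : List (ℤ × ℤ) //
      IsPDPath L l ∧ (∀ q ∈ pathVertices l, 0 ≤ q.2) ∧ l.sum.2 = 0} := by
    refine ⟨⟨List.replicate L ((1 : ℤ), (0 : ℤ)), eastPath_is, ?_, ?_⟩⟩
    · rw [vertices_prop_iff]
      intro j _
      rw [List.take_replicate, replicate_east_sum]
    · rw [replicate_east_sum]
  exact Nat.card_pos

lemma tendsto_c_atTop :
    Tendsto (fun n : ℕ => ((2 * n + 3 : ℕ) : ℝ)) atTop atTop := by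
  apply Filter.tendsto_atTop_mono (f := fun n : ℕ => (n : ℝ))
  · intro n; push_cast; linarith [Nat.cast_nonneg (α := ℝ) n]
  · exact tendsto_natCast_atTop_atTop

lemma tendsto_c_inv :
    Tendsto (fun n : ℕ => ((2 * n + 3 : ℕ) : ℝ)⁻¹) atTop (nhds 0) :=
  tendsto_c_atTop.inv_tendsto_atTop

lemma tendsto_c_rpow_inv :
    Tendsto (fun n : ℕ => ((2 * n + 3 : ℕ) : ℝ) ^ (((2 * n + 3 : ℕ) : ℝ))⁻¹)
      atTop (nhds 1) := by
  have h := tendsto_rpow_div.comp tendsto_c_atTop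
  have h2 : (fun n : ℕ => ((2 * n + 3 : ℕ) : ℝ) ^ (((2 * n + 3 : ℕ) : ℝ))⁻¹)
      = ((fun x : ℝ => x ^ (1/x)) ∘ fun n : ℕ => ((2 * n + 3 : ℕ) : ℝ)) := by
    funext n
    simp [Function.comp, one_div]
  rw [h2]
  exact h

/-- key: loop counts approach the full growth rate -/
lemma exists_good_L {b : ℝ} (hb : b < phi) :
    ∃ L : ℕ, b < (numPDhalfEnd0 L : ℝ) ^ (((L : ℝ) + 1))⁻¹ := by
  have hexp : Tendsto (fun n : ℕ => (2 * (n:ℝ)) * (((2 * n + 3 : ℕ) : ℝ))⁻¹)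
      atTop (nhds 1) := by
    have heq : (fun n : ℕ => (2 * (n:ℝ)) * (((2 * n + 3 : ℕ) : ℝ))⁻¹)
        = fun n : ℕ => 1 - 3 * (((2 * n + 3 : ℕ) : ℝ))⁻¹ := by
      funext n
      have hc : ((2 * n + 3 : ℕ) : ℝ) ≠ 0 := by positivity
      have h2 : (2 * (n:ℝ)) = ((2 * n + 3 : ℕ) : ℝ) - 3 := by push_cast; ring
      rw [h2, sub_mul, mul_inv_cancel₀ hc]
    rw [heq]
    have := (tendsto_c_inv.const_mul (3:ℝ)).const_sub 1
    simpa using this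
  have hnum : Tendsto (fun n : ℕ => phi ^ ((2 * (n:ℝ)) * (((2 * n + 3 : ℕ) : ℝ))⁻¹))
      atTop (nhds phi) := by
    have := Filter.Tendsto.rpow
      (tendsto_const_nhds : Tendsto (fun _ : ℕ => phi) atTop (nhds phi))
      hexp (Or.inl (ne_of_gt phi_pos))
    simpa using this
  have hden : Tendsto (fun n : ℕ =>
      ((((2 * n + 3 : ℕ) : ℝ) ^ (((2 * n + 3 : ℕ) : ℝ))⁻¹) ^ (3 : ℕ))) atTop (nhds 1) := by
    have := tendsto_c_rpow_inv.pow 3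
    simpa using this
  have htend : Tendsto (fun n : ℕ => phi ^ ((2 * (n:ℝ)) * (((2 * n + 3 : ℕ) : ℝ))⁻¹) /
      ((((2 * n + 3 : ℕ) : ℝ) ^ (((2 * n + 3 : ℕ) : ℝ))⁻¹) ^ (3 : ℕ)))
      atTop (nhds phi) := by
    have := hnum.div hden (by norm_num)
    rw [div_one] at this
    exact this
  obtain ⟨n, hn⟩ := (htend.eventually (eventually_gt_nhds hb)).exists
  refine ⟨2 * n + 2, ?_⟩
  set c : ℝ := ((2 * n + 3 : ℕ) : ℝ) with hc
  have hcpos : (0:ℝ) < c := by positivity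
  set a : ℝ := (numPDhalfEnd0 (2 * n + 2) : ℝ) with ha
  have hanonneg : (0:ℝ) ≤ a := by positivity
  -- numeric bound
  have hkey : phi ^ (2 * n) ≤ c ^ (3:ℕ) * a := by
    have h1 : (numPD n : ℝ) ^ 2 ≤ ((2 * n + 3)^3 * numPDhalfEnd0 (2 * n + 2) : ℕ) := by
      exact_mod_cast loops_lower n
    have h2 : phi ^ (2*n) ≤ (numPD n : ℝ) ^ 2 := by
      have := (numPD_bounds n).1
      calc phi ^ (2*n) = (phi ^ n)^2 := by ring
        _ ≤ (numPD n : ℝ)^2 := by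
            have hpn : (0:ℝ) ≤ phi ^ n := le_of_lt (pow_pos phi_pos n)
            nlinarith
    refine h2.trans (h1.trans ?_)
    rw [hc, ha]
    push_cast
    exact le_rfl
  have haL : phi ^ (2 * n) / c ^ (3:ℕ) ≤ a := by
    rw [div_le_iff₀ (by positivity)]
    nlinarith [hkey, pow_pos hcpos 3]
  have monot := Real.rpow_le_rpow (by positivity) haL (inv_nonneg.2 hcpos.le)
  rw [Real.div_rpow (by positivity) (by positivity)] at monot
  rw [← Real.rpow_natCast phi (2 * n), ← Real.rpow_mul phi_pos.le] at monot
  rw [← Real.rpow_natCast c 3, ← Real.rpow_mul hcpos.le, mul_comm ((3:ℕ):ℝ),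
    Real.rpow_mul hcpos.le, Real.rpow_natCast] at monot
  push_cast at monot
  have hcexp : (((2 * n + 2 : ℕ) : ℝ) + 1) = c := by rw [hc]; push_cast; ring
  rw [hcexp]
  refine lt_of_lt_of_le ?_ monot
  exact hn

lemma asym_lower {p : ℕ} (hp : 1 ≤ p) {b : ℝ} (hb : b < phi) :
    ∀ᶠ n in atTop, b < (numPDasym p n : ℝ) ^ ((n : ℝ)⁻¹) := by
  obtain ⟨L, hL⟩ := exists_good_L hb
  set a : ℝ := (numPDhalfEnd0 L : ℝ) with ha
  have ha1 : (1:ℝ) ≤ a := by rw [ha]; exact_mod_cast numPDhalfEnd0_pos L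
  have hapos : (0:ℝ) < a := lt_of_lt_of_le one_pos ha1
  have hkey : ∀ n, L ≤ n → numPDhalfEnd0 L ^ ((n - L) / (L + 1)) ≤ numPDasym p n := by
    intro n hn
    refine (wedge_lower hp L ((n - L) / (L + 1))).trans (numPDasym_mono p ?_)
    have hkn : (n - L) / (L + 1) * (L + 1) ≤ n - L := Nat.div_mul_le_self (n - L) (L + 1)
    omega
  set u : ℝ := ((L : ℝ) + 1)⁻¹ with hu
  have hL1pos : (0:ℝ) < (L : ℝ) + 1 := by positivity
  have hupos : (0:ℝ) < u := by rw [hu]; positivity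
  have huone : ((L : ℝ) + 1) * u = 1 := mul_inv_cancel₀ (ne_of_gt hL1pos)
  have hule : u ≤ 1 := by
    rw [hu]
    rw [inv_le_one_iff₀]
    right
    linarith [Nat.cast_nonneg (α := ℝ) L]
  have hexp : Tendsto (fun n : ℕ => (((n - L) / (L + 1) : ℕ) : ℝ) * (n : ℝ)⁻¹) atTop (nhds u) := by
    have hlo : Tendsto (fun n : ℕ => u - (2 * (L:ℝ) + 1) * (n : ℝ)⁻¹) atTop (nhds u) := by
      have := (tendsto_inv_atTop_nhds_zero_nat.const_mul ((2 * (L:ℝ) + 1))).const_sub u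
      simpa using this
    refine tendsto_of_tendsto_of_tendsto_of_le_of_le' hlo tendsto_const_nhds ?_ ?_
    · filter_upwards [eventually_ge_atTop (L + 1)] with n hn
      have hnpos : (0:ℝ) < (n : ℝ) := by
        have : (0:ℕ) < n := by omega
        exact_mod_cast this
      have hninv : (0:ℝ) ≤ (n : ℝ)⁻¹ := by positivity
      have hninv1 : (n:ℝ) * (n:ℝ)⁻¹ = 1 := mul_inv_cancel₀ (ne_of_gt hnpos)
      have hknr : ((n : ℝ) - (2 * (L:ℝ) + 1)) ≤ (((n - L) / (L + 1) : ℕ) : ℝ) * ((L : ℝ) + 1) := by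
        have hdm := Nat.div_add_mod (n - L) (L + 1)
        have hmod : (n - L) % (L + 1) < L + 1 := Nat.mod_lt _ (by omega)
        have h1 : n ≤ (L + 1) * ((n - L) / (L + 1)) + (2 * L + 1) := by
          omega
        have := (Nat.cast_le (α := ℝ)).2 h1
        push_cast at this
        linarith
      have hknr2 : ((n : ℝ) - (2 * (L:ℝ) + 1)) * u ≤ (((n - L) / (L + 1) : ℕ) : ℝ) := by
        have := mul_le_mul_of_nonneg_right hknr hupos.le
        calc ((n : ℝ) - (2 * (L:ℝ) + 1)) * u ≤ (((n - L) / (L + 1) : ℕ) : ℝ) * ((L : ℝ) + 1) * u := this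
          _ = (((n - L) / (L + 1) : ℕ) : ℝ) * (((L : ℝ) + 1) * u) := by ring
          _ = (((n - L) / (L + 1) : ℕ) : ℝ) := by rw [huone, mul_one]
      nlinarith [mul_le_mul_of_nonneg_right hknr2 hninv,
        mul_nonneg (mul_nonneg (by positivity : (0:ℝ) ≤ 2 * (L:ℝ) + 1) hninv)
          (by linarith : (0:ℝ) ≤ 1 - u), hninv1]
    · filter_upwards [eventually_ge_atTop 1] with n hn
      have hnpos : (0:ℝ) < (n : ℝ) := by
        have : (0:ℕ) < n := by omega
        exact_mod_cast this
      have hninv : (0:ℝ) ≤ (n : ℝ)⁻¹ := by positivity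
      have hninv1 : (n:ℝ) * (n:ℝ)⁻¹ = 1 := mul_inv_cancel₀ (ne_of_gt hnpos)
      have hknr : (((n - L) / (L + 1) : ℕ) : ℝ) * ((L : ℝ) + 1) ≤ (n : ℝ) := by
        have h1 : (L + 1) * ((n - L) / (L + 1)) ≤ n := by
          have h2 : (n - L) / (L + 1) * (L + 1) ≤ n - L := Nat.div_mul_le_self (n - L) (L + 1)
          calc (L + 1) * ((n - L) / (L + 1)) = (n - L) / (L + 1) * (L + 1) := Nat.mul_comm _ _
            _ ≤ n - L := h2
            _ ≤ n := Nat.sub_le _ _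
        have := (Nat.cast_le (α := ℝ)).2 h1
        push_cast at this
        linarith
      nlinarith [mul_le_mul_of_nonneg_right hknr (mul_nonneg hninv hupos.le), hninv1, huone]
  have hg : Tendsto (fun n : ℕ => a ^ ((((n - L) / (L + 1) : ℕ) : ℝ) * (n : ℝ)⁻¹)) atTop (nhds (a ^ u)) :=
    Filter.Tendsto.rpow tendsto_const_nhds hexp (Or.inl (ne_of_gt hapos))
  have hev1 : ∀ᶠ n in atTop, b < a ^ ((((n - L) / (L + 1) : ℕ) : ℝ) * (n : ℝ)⁻¹) :=
    hg.eventually (eventually_gt_nhds hL)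
  have hev2 : ∀ᶠ n in atTop,
      a ^ ((((n - L) / (L + 1) : ℕ) : ℝ) * (n : ℝ)⁻¹) ≤ (numPDasym p n : ℝ) ^ ((n : ℝ)⁻¹) := by
    filter_upwards [eventually_ge_atTop L] with n hn
    have h1 : a ^ ((n - L) / (L + 1)) ≤ (numPDasym p n : ℝ) := by
      rw [ha]
      exact_mod_cast hkey n hn
    have h2 := Real.rpow_le_rpow (by positivity) h1 (inv_nonneg.2 (Nat.cast_nonneg n))
    rwa [← Real.rpow_natCast a ((n - L) / (L + 1)), ← Real.rpow_mul hapos.le] at h2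
  filter_upwards [hev1, hev2] with n h1 h2
  exact lt_of_lt_of_le h1 h2

lemma upper_event {b : ℝ} (hb : phi < b) {u : ℕ → ℕ} (hu : ∀ n, u n ≤ numPD n) :
    ∀ᶠ n in atTop, (u n : ℝ) ^ ((n : ℝ)⁻¹) < b := by
  have hUexp : Tendsto (fun n : ℕ => ((n:ℝ) + 1) * (n:ℝ)⁻¹) atTop (nhds 1) := by
    have h0 : Tendsto (fun n : ℕ => 1 + (n:ℝ)⁻¹) atTop (nhds 1) := by
      have := tendsto_inv_atTop_nhds_zero_nat.const_add (1:ℝ)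
      simpa using this
    refine Filter.Tendsto.congr' ?_ h0
    filter_upwards [eventually_ge_atTop 1] with n hn
    have hnne : (n:ℝ) ≠ 0 := by
      have : (0:ℕ) < n := by omega
      exact_mod_cast (Nat.cast_pos.2 this).ne'
    rw [add_mul, mul_inv_cancel₀ hnne, one_mul, add_comm]
  have hUpow : Tendsto (fun n : ℕ => phi ^ (((n:ℝ) + 1) * (n:ℝ)⁻¹)) atTop (nhds phi) := by
    have := Filter.Tendsto.rpow
      (tendsto_const_nhds : Tendsto (fun _ : ℕ => phi) atTop (nhds phi))
      hUexp (Or.inl (ne_of_gt phi_pos))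
    simpa using this
  filter_upwards [hUpow.eventually (eventually_lt_nhds hb)] with n hn
  have h1 : (u n : ℝ) ≤ phi ^ (n + 1) := by
    refine le_trans ?_ (numPD_bounds n).2
    exact_mod_cast hu n
  have h2 := Real.rpow_le_rpow (by positivity) h1 (inv_nonneg.2 (Nat.cast_nonneg n))
  rw [← Real.rpow_natCast phi (n + 1), ← Real.rpow_mul phi_pos.le] at h2
  push_cast at h2
  exact lt_of_le_of_lt h2 hn

lemma main_asym {p : ℕ} (hp : 1 ≤ p) :
    Tendsto (fun n : ℕ => (numPDasym p n : ℝ) ^ ((n : ℝ)⁻¹)) atTop (nhds phi) := by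
  rw [tendsto_order]
  constructor
  · intro b hb
    exact asym_lower hp hb
  · intro b hb
    exact upper_event hb (fun n => (asym_le_sym p n).trans (sym_le_numPD p n))

lemma main_sym {p : ℕ} (hp : 1 ≤ p) :
    Tendsto (fun n : ℕ => (numPDsym p n : ℝ) ^ ((n : ℝ)⁻¹)) atTop (nhds phi) := by
  rw [tendsto_order]
  constructor
  · intro b hb
    filter_upwards [asym_lower hp hb] with n hn
    refine lt_of_lt_of_le hn ?_
    refine Real.rpow_le_rpow (by positivity) ?_ (inv_nonneg.2 (Nat.cast_nonneg n))
    exact_mod_cast asym_le_sym p n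
  · intro b hb
    exact upper_event hb (sym_le_numPD p)

end PDW

theorem wedge_growth_constants (p : ℕ) (hp : 1 ≤ p) :
    Filter.Tendsto (fun n : ℕ => (numPDsym p n : ℝ) ^ ((n : ℝ)⁻¹)) Filter.atTop
      (nhds (1 + Real.sqrt 2)) ∧
    Filter.Tendsto (fun n : ℕ => (numPDasym p n : ℝ) ^ ((n : ℝ)⁻¹)) Filter.atTop
      (nhds (1 + Real.sqrt 2)) :=
  ⟨PDW.main_sym hp, PDW.main_asym hp⟩
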